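/- Let α, β ∈ ℝ with 0 < β < α < b, b ≥ 2 an integer, and α irrational. Then the sequence u_n = ⌊log_b(αn + β)⌋ is not b-regular. -/

import Mathlib

lemma aux_floor_logb {b : ℕ} (hb : 2 ≤ b) {m : ℕ} {x : ℝ}
    (h1 : (b:ℝ)^m ≤ x) (h2 : x < (b:ℝ)^(m+1)) : ⌊Real.logb b x⌋ = m := by
  have hb1 : (1:ℝ) < (b:ℝ) := by exact_mod_cast hb.trans_lt' one_lt_two
  have hbp : (0:ℝ) < b := by linarith
  have hx : 0 < x := lt_of_lt_of_le (pow_pos hbp m) h1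
  have hpow : ∀ k : ℕ, Real.logb b ((b:ℝ)^k) = k := by
    intro k
    rw [Real.logb_pow, Real.logb_self_eq_one hb1, mul_one]
  rw [Int.floor_eq_iff]
  constructor
  · calc ((m:ℤ):ℝ) = Real.logb b ((b:ℝ)^m) := by rw [hpow]; push_cast; ring
      _ ≤ Real.logb b x := Real.logb_le_logb_of_le hb1 (pow_pos hbp m) h1
  · calc Real.logb b x < Real.logb b ((b:ℝ)^(m+1)) := Real.logb_lt_logb hb1 hx h2
      _ = (m:ℤ) + 1 := by rw [hpow]; push_cast; ring

set_option maxHeartbeats 2000000 in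
theorem stmt_17 (α β : ℝ) (b : ℕ) (hb : 2 ≤ b) (hirr : Irrational α)
    (hβ : 0 < β) (hβα : β < α) (hαb : α < b)
    (u : ℕ → ℤ) (hu : ∀ n, u n = ⌊Real.logb b (α * n + β)⌋) :
    ¬ (Submodule.span ℤ {g : ℕ → ℤ | ∃ i j : ℕ, j < b ^ i ∧
      g = fun n => u (b ^ i * n + j)}).FG := by
  intro hFG
  classical
  obtain ⟨G, hG⟩ := hFG
  set N : ℕ := G.card + 1 with hNdef
  have hα : 0 < α := hβ.trans hβα
  have hb1 : (1:ℝ) < (b:ℝ) := by exact_mod_cast hb.trans_lt' one_lt_two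
  have hbp : (0:ℝ) < b := by linarith
  have hb2 : (2:ℝ) ≤ (b:ℝ) := by exact_mod_cast hb
  -- the jump positions and fractional offsets
  set P : ℕ → ℕ := fun k => ⌊(b:ℝ)^k / α⌋₊ with hPdef
  set θ : ℕ → ℝ := fun k => (b:ℝ)^k - α * P k with hθdef
  have hirrk : ∀ k : ℕ, Irrational ((b:ℝ)^k / α) := by
    intro k
    have h2 : Irrational ((b^k : ℕ) * α⁻¹) :=
      (hirr.inv).natCast_mul (pow_ne_zero k (by omega : b ≠ 0))
    have : ((b^k : ℕ) : ℝ) * α⁻¹ = (b:ℝ)^k / α := by push_cast; ring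
    rwa [this] at h2
  have hPle : ∀ k, α * P k < (b:ℝ)^k := by
    intro k
    have h1 : (P k : ℝ) ≤ (b:ℝ)^k / α := Nat.floor_le (by positivity)
    have h2 : (P k : ℝ) ≠ (b:ℝ)^k / α := by
      intro h
      exact (hirrk k) ⟨(P k : ℚ), by rw [← h]; push_cast; ring⟩
    have := lt_of_le_of_ne h1 h2
    calc α * P k = (P k : ℝ) * α := by ring
      _ < ((b:ℝ)^k / α) * α := by exact mul_lt_mul_of_pos_right this hα
      _ = (b:ℝ)^k := by field_simp
  have hθpos : ∀ k, 0 < θ k := fun k => by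
    have := hPle k; simp only [hθdef]; linarith
  have hθlt : ∀ k, θ k < α := by
    intro k
    have h1 : (b:ℝ)^k / α < P k + 1 := Nat.lt_floor_add_one _
    have h2 : (b:ℝ)^k < (P k + 1) * α := by
      rw [div_lt_iff₀ hα] at h1; exact h1
    simp only [hθdef]; nlinarith
  have hθinj : Function.Injective θ := by
    intro k k' h
    by_contra hne
    simp only [hθdef] at h
    rcases eq_or_ne (P k) (P k') with hP | hP
    · have : (b:ℝ)^k = (b:ℝ)^k' := by rw [hP] at h; linarith
      have : ((b^k : ℕ) : ℝ) = ((b^k' : ℕ) : ℝ) := by push_cast; exact this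
      exact hne (Nat.pow_right_injective hb (Nat.cast_injective this))
    · apply hirr
      have hd : ((P k : ℝ)) - (P k') ≠ 0 := by
        intro hz
        apply hP
        exact Nat.cast_injective (by linarith : ((P k : ℝ)) = P k')
      refine ⟨((b^k : ℤ) - (b^k' : ℤ) : ℚ) / (((P k : ℤ) - (P k' : ℤ) : ℤ) : ℚ), ?_⟩
      push_cast
      rw [div_eq_iff hd]
      nlinarith [h]
  -- choose N distinct θ-values and sort them
  set F : Finset ℝ := (Finset.range N).image (fun r => θ (r+2)) with hFdef
  have hcard : F.card = N := by
    rw [hFdef, Finset.card_image_of_injective _ (fun a a' haa => by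
      have := hθinj haa; omega), Finset.card_range]
  set e := F.orderIsoOfFin hcard with hedef
  set v : Fin N → ℝ := fun s => (e s : ℝ) with hvdef
  have hvmono : StrictMono v := by
    intro s t hst
    exact_mod_cast e.strictMono hst
  have hvmem : ∀ s, ∃ k, 2 ≤ k ∧ θ k = v s := by
    intro s
    have h2 : (e s : ℝ) ∈ Finset.image (fun r => θ (r+2)) (Finset.range N) := (e s).2
    obtain ⟨r, _, hr2⟩ := Finset.mem_image.mp h2
    exact ⟨r+2, by omega, hr2⟩
  choose κ hκ2 hκv using hvmem
  have hv0 : ∀ s, 0 < v s := fun s => (hκv s) ▸ hθpos (κ s)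
  have hvα : ∀ s, v s < α := fun s => (hκv s) ▸ hθlt (κ s)
  -- boundary values
  have hN1 : 1 ≤ N := by omega
  set V : ℕ → ℝ := fun s => if h : s < N then v ⟨s, h⟩ else α with hVdef
  have hVpos : ∀ s, 0 < V s := by
    intro s; rw [hVdef]; dsimp only; split
    · exact hv0 _
    · exact hα
  have hVle : ∀ s, V s ≤ α := by
    intro s; rw [hVdef]; dsimp only; split
    · exact (hvα _).le
    · exact le_rfl
  have hVmono : Monotone V := by
    intro a c hac
    rw [hVdef]; dsimp only
    split <;> split
    · exact (hvmono.le_iff_le).mpr (by exact_mod_cast hac)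
    · exact (hvα _).le
    · omega
    · exact le_rfl
  -- interleaving targets
  set lo : ℕ → ℝ := fun t => if t = 0 then 0 else V (t-1) with hlodef
  have hlo0 : ∀ t, 0 ≤ lo t := by
    intro t; rw [hlodef]; dsimp only; split
    · exact le_rfl
    · exact (hVpos _).le
  have hloV : ∀ t, t ≤ N → lo t < V t := by
    intro t ht
    rw [hlodef]; dsimp only; split
    · exact hVpos t
    · rcases lt_or_ge t N with h | h
      · rw [hVdef]; dsimp only
        rw [dif_pos (by omega : t - 1 < N), dif_pos h]
        exact hvmono (Fin.mk_lt_mk.mpr (by omega) : (⟨t-1, by omega⟩ : Fin N) < ⟨t, h⟩)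
      · have htN : t = N := by omega
        rw [hVdef]; dsimp only
        rw [dif_pos (by omega : t - 1 < N), dif_neg (by omega : ¬ t < N)]
        exact hvα _
  set mid : ℕ → ℝ := fun t => (lo t + V t)/2 with hmiddef
  have hmidpos : ∀ t, t ≤ N → 0 < mid t := by
    intro t ht; rw [hmiddef]; dsimp only
    have := hlo0 t; have := hVpos t; linarith
  have hmidlt : ∀ t, t ≤ N → mid t < V t := by
    intro t ht; have := hloV t ht; rw [hmiddef]; dsimp only; linarith
  have hlomid : ∀ t, t ≤ N → lo t < mid t := by
    intro t ht; have := hloV t ht; rw [hmiddef]; dsimp only; linarith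
  -- choose the common exponent i
  have hNne : (Finset.range (N+1)).Nonempty := ⟨0, by simp⟩
  set D : ℝ := (Finset.range (N+1)).sup' hNne
      (fun t => max (β / mid t) (α / (V t - mid t))) with hDdef
  obtain ⟨i, hiD⟩ := pow_unbounded_of_one_lt D hb1
  have hi1 : ∀ t, t ≤ N → β / mid t < (b:ℝ)^i ∧ α / (V t - mid t) < (b:ℝ)^i := by
    intro t ht
    have hmem : t ∈ Finset.range (N+1) := Finset.mem_range.mpr (by omega)
    have h1 := Finset.le_sup' (fun t => max (β / mid t) (α / (V t - mid t))) hmem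
    rw [← hDdef] at h1
    constructor
    · exact lt_of_le_of_lt (le_trans (le_max_left _ _) h1) hiD
    · exact lt_of_le_of_lt (le_trans (le_max_right _ _) h1) hiD
  have hbipos : (0:ℝ) < (b:ℝ)^i := pow_pos hbp i
  have hc1 : ∀ t, t ≤ N → β < mid t * (b:ℝ)^i := by
    intro t ht
    have := (hi1 t ht).1
    rw [div_lt_iff₀ (hmidpos t ht)] at this
    linarith [this]
  have hc2 : ∀ t, t ≤ N → mid t + α / (b:ℝ)^i < V t := by
    intro t ht
    have h2 := (hi1 t ht).2
    have hsub : 0 < V t - mid t := by have := hmidlt t ht; linarith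
    rw [div_lt_iff₀ hsub] at h2
    have : α / (b:ℝ)^i < V t - mid t := by
      rw [div_lt_iff₀ hbipos]; nlinarith
    linarith
  -- the shifts j and offsets γ
  set j : ℕ → ℕ := fun t => ⌈(mid t * (b:ℝ)^i - β)/α⌉₊ with hjdef
  set γ : ℕ → ℝ := fun t => (α * j t + β)/(b:ℝ)^i with hγdef
  have hγlo : ∀ t, t ≤ N → mid t ≤ γ t := by
    intro t ht
    have h1 : ((j t : ℝ)) ≥ (mid t * (b:ℝ)^i - β)/α := Nat.le_ceil _
    rw [ge_iff_le, div_le_iff₀ hα] at h1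
    rw [hγdef]; dsimp only
    rw [le_div_iff₀ hbipos]
    nlinarith
  have hγhi : ∀ t, t ≤ N → γ t < V t := by
    intro t ht
    have harg : 0 ≤ (mid t * (b:ℝ)^i - β)/α := by
      have := hc1 t ht
      exact div_nonneg (by linarith) hα.le
    have h1 : ((j t : ℝ)) < (mid t * (b:ℝ)^i - β)/α + 1 := Nat.ceil_lt_add_one harg
    rw [hγdef]; dsimp only
    rw [div_lt_iff₀ hbipos]
    have h2 : α * j t < mid t * (b:ℝ)^i - β + α := by
      rw [div_add' _ _ _ hα.ne'] at h1
      rw [lt_div_iff₀ hα] at h1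
      nlinarith
    have h3 := hc2 t ht
    have h4 : (mid t + α / (b:ℝ)^i) * (b:ℝ)^i = mid t * (b:ℝ)^i + α := by
      field_simp
    have h5 : mid t * (b:ℝ)^i + α < V t * (b:ℝ)^i := by
      rw [← h4]
      exact mul_lt_mul_of_pos_right h3 hbipos
    linarith
  have hγpos : ∀ t, t ≤ N → 0 < γ t := by
    intro t ht
    exact lt_of_lt_of_le (hmidpos t ht) (hγlo t ht)
  have hjlt : ∀ t, t ≤ N → j t < b^i := by
    intro t ht
    have h1 : γ t < α := lt_of_lt_of_le (hγhi t ht) (hVle t)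
    rw [hγdef] at h1; dsimp only at h1
    rw [div_lt_iff₀ hbipos] at h1
    have h2 : α * j t < α * (b:ℝ)^i := by nlinarith
    have h3 : ((j t : ℝ)) < (b:ℝ)^i := by
      exact lt_of_mul_lt_mul_left h2 hα.le
    have : ((j t : ℝ)) < ((b^i : ℕ) : ℝ) := by push_cast; exact h3
    exact_mod_cast this
  -- comparisons between γ and the sorted θ values
  have hγgt : ∀ (t : ℕ) (s : Fin N), t ≤ N → (s:ℕ) < t → v s < γ t := by
    intro t s ht hst
    have h1 : lo t < γ t := lt_of_lt_of_le (hlomid t ht) (hγlo t ht)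
    have h2 : V (s:ℕ) ≤ lo t := by
      rw [hlodef]; dsimp only
      rw [if_neg (by omega : ¬ t = 0)]
      exact hVmono (by omega)
    have h3 : V (s:ℕ) = v s := by
      rw [hVdef]; dsimp only
      rw [dif_pos s.isLt]
    rw [← h3]
    linarith
  have hγlt : ∀ (t : ℕ) (s : Fin N), t ≤ N → t ≤ (s:ℕ) → γ t < v s := by
    intro t s ht hst
    have h1 : γ t < V t := hγhi t ht
    have h2 : V t ≤ V (s:ℕ) := hVmono hst
    have h3 : V (s:ℕ) = v s := by
      rw [hVdef]; dsimp only
      rw [dif_pos s.isLt]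
    rw [← h3]
    linarith
  -- the key identity
  have key : ∀ t n : ℕ, t ≤ N →
      u (b ^ i * n + j t) = (i:ℤ) + ⌊Real.logb b (α * n + γ t)⌋ := by
    intro t n ht
    have hx : (0:ℝ) < α * n + γ t := by
      have := hγpos t ht
      have : (0:ℝ) ≤ α * n := by positivity
      linarith [hγpos t ht]
    have harg : α * ((b ^ i * n + j t : ℕ):ℝ) + β = (b:ℝ)^i * (α * n + γ t) := by
      rw [hγdef]; dsimp only
      push_cast
      field_simp
      ring
    rw [hu, harg, Real.logb_mul (by positivity) hx.ne',
      Real.logb_pow, Real.logb_self_eq_one hb1, mul_one]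
    rw [show ((i:ℝ) + Real.logb b (α * n + γ t)) = Real.logb b (α * n + γ t) + ((i:ℤ):ℝ) by
      push_cast; ring]
    rw [Int.floor_add_intCast]
    ring
  -- evaluation of kernel elements at the jump points
  have Eval : ∀ (s : Fin N) (t : ℕ), t ≤ N →
      u (b ^ i * P (κ s) + j t)
        = (i:ℤ) + (κ s : ℤ) - 1 + (if (s:ℕ) < t then 1 else 0) := by
    intro s t ht
    set k := κ s with hkdef
    have hk2 : 2 ≤ k := hκ2 s
    have hθk : θ k = v s := hκv s
    have hαP : α * P k = (b:ℝ)^k - θ k := by rw [hθdef]; dsimp only; ring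
    have hbig : (b:ℝ)^(k-1) + α < (b:ℝ)^k := by
      have hkk : k - 1 + 1 = k := by omega
      have h1 : (b:ℝ)^1 ≤ (b:ℝ)^(k-1) := pow_le_pow_right₀ (by linarith) (by omega)
      rw [pow_one] at h1
      have h2 : (b:ℝ)^k = (b:ℝ)^(k-1) * b := by
        rw [← pow_succ, hkk]
      have h3 : (b:ℝ) * 1 ≤ (b:ℝ)^(k-1) * ((b:ℝ)-1) :=
        mul_le_mul h1 (by linarith) (by linarith) (by positivity)
      have h4 : (b:ℝ)^(k-1) * (b:ℝ) - (b:ℝ)^(k-1) = (b:ℝ)^(k-1) * ((b:ℝ)-1) := by ring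
      linarith
    have hbig2 : (b:ℝ)^k + α < (b:ℝ)^(k+1) := by
      have h1 : (b:ℝ)^1 ≤ (b:ℝ)^k := pow_le_pow_right₀ (by linarith) (by omega)
      rw [pow_one] at h1
      have h2 : (b:ℝ)^(k+1) = (b:ℝ)^k * b := by rw [← pow_succ]
      have h3 : (b:ℝ) * 1 ≤ (b:ℝ)^k * ((b:ℝ)-1) :=
        mul_le_mul h1 (by linarith) (by linarith) (by positivity)
      have h4 : (b:ℝ)^k * (b:ℝ) - (b:ℝ)^k = (b:ℝ)^k * ((b:ℝ)-1) := by ring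
      linarith
    rcases lt_or_ge (s:ℕ) t with hst | hst
    · -- γ t > θ k : value k
      have hγθ : θ k < γ t := hθk ▸ hγgt t s ht hst
      have hγα : γ t < α := lt_of_lt_of_le (hγhi t ht) (hVle t)
      have hlow : (b:ℝ)^k ≤ α * P k + γ t := by
        rw [hαP]; linarith
      have hhigh : α * P k + γ t < (b:ℝ)^(k+1) := by
        rw [hαP]
        have := hθpos k
        linarith
      rw [key t (P k) ht, if_pos hst]
      rw [show α * (P k : ℝ) + γ t = α * ((P k : ℕ):ℝ) + γ t by norm_cast]
      rw [aux_floor_logb hb hlow hhigh]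
      push_cast
      ring
    · -- γ t < θ k : value k - 1
      have hγθ : γ t < θ k := hθk ▸ hγlt t s ht hst
      have hlow : (b:ℝ)^(k-1) ≤ α * P k + γ t := by
        rw [hαP]
        have h1 := hθlt k
        have h2 := hγpos t ht
        linarith
      have hkk : k - 1 + 1 = k := by omega
      have hhigh : α * P k + γ t < (b:ℝ)^(k-1+1) := by
        rw [hkk, hαP]
        linarith
      rw [key t (P k) ht, if_neg (by omega)]
      rw [show α * (P k : ℝ) + γ t = α * ((P k : ℕ):ℝ) + γ t by norm_cast]
      rw [aux_floor_logb hb hlow hhigh]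
      push_cast [Nat.cast_sub (by omega : 1 ≤ k)]
      ring
  -- evaluation map into ℚ-vectors
  let T : (ℕ → ℤ) →ₗ[ℤ] (Fin N → ℚ) :=
    { toFun := fun g s => ((g (P (κ s)) : ℤ) : ℚ)
      map_add' := fun g g' => by funext s; push_cast [Pi.add_apply]; ring
      map_smul' := fun c g => by
        funext s
        simp only [Pi.smul_apply, smul_eq_mul, zsmul_eq_mul, RingHom.id_apply]
        push_cast
        ring }
  have hmem : ∀ t, t ≤ N →
      (fun n => u (b ^ i * n + j t)) ∈ Submodule.span ℤ (G : Set (ℕ → ℤ)) := by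
    intro t ht
    rw [hG]
    exact Submodule.subset_span ⟨i, j t, hjlt t ht, rfl⟩
  set W : Submodule ℚ (Fin N → ℚ) :=
    Submodule.span ℚ ((G.image (fun g => T g) : Finset (Fin N → ℚ)) : Set (Fin N → ℚ))
    with hWdef
  have hTmem : ∀ x, x ∈ Submodule.span ℤ (G : Set (ℕ → ℤ)) → T x ∈ W := by
    intro x hx
    have h1 : T x ∈ T '' (Submodule.span ℤ (G : Set (ℕ → ℤ)) : Set (ℕ → ℤ)) := ⟨x, hx, rfl⟩
    have h2 := Submodule.image_span_subset_span T (G : Set (ℕ → ℤ)) h1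
    have h3 := Submodule.span_subset_span ℤ ℚ (T '' (G : Set (ℕ → ℤ))) h2
    rw [hWdef, ← Finset.coe_image] at *
    exact h3
  have hwmem : ∀ t : Fin N, (Pi.single t (1:ℚ) : Fin N → ℚ) ∈ W := by
    intro t
    have h1 := hTmem _ (hmem ((t:ℕ)+1) (by omega))
    have h2 := hTmem _ (hmem (t:ℕ) (by omega))
    have h3 : (Pi.single t (1:ℚ) : Fin N → ℚ)
        = T (fun n => u (b ^ i * n + j ((t:ℕ)+1))) - T (fun n => u (b ^ i * n + j (t:ℕ))) := by
      funext s
      simp only [Pi.sub_apply]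
      show (Pi.single t (1:ℚ) : Fin N → ℚ) s
        = ((u (b ^ i * P (κ s) + j ((t:ℕ)+1)) : ℤ) : ℚ)
          - ((u (b ^ i * P (κ s) + j (t:ℕ)) : ℤ) : ℚ)
      rw [Eval s ((t:ℕ)+1) (by omega), Eval s (t:ℕ) (by omega)]
      rcases eq_or_ne s t with h | h
      · subst h
        rw [if_pos (by omega), if_neg (by omega), Pi.single_eq_same]
        push_cast
        ring
      · rw [Pi.single_eq_of_ne h]
        have hne : (s:ℕ) ≠ (t:ℕ) := fun hh => h (Fin.ext hh)
        by_cases hlt : (s:ℕ) < (t:ℕ)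
        · rw [if_pos (by omega), if_pos hlt]; push_cast; ring
        · rw [if_neg (by omega), if_neg hlt]; push_cast; ring
    rw [h3]
    exact Submodule.sub_mem W h1 h2
  have hind : LinearIndependent ℚ (fun t : Fin N => (Pi.single t (1:ℚ) : Fin N → ℚ)) := by
    have h := (Pi.basisFun ℚ (Fin N)).linearIndependent
    have he : ⇑(Pi.basisFun ℚ (Fin N)) = fun t : Fin N => (Pi.single t (1:ℚ) : Fin N → ℚ) := by
      funext t
      exact Pi.basisFun_apply ℚ (Fin N) t
    rwa [he] at h
  let ω : Fin N → W := fun t => ⟨Pi.single t 1, hwmem t⟩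
  have hω : LinearIndependent ℚ ω := by
    apply LinearIndependent.of_comp W.subtype
    exact hind
  haveI : Module.Finite ℚ W := by
    rw [hWdef]
    infer_instance
  have hcardle := hω.fintype_card_le_finrank
  have hfin : Module.finrank ℚ W ≤ (G.image (fun g => T g)).card := by
    have h := finrank_span_finset_le_card (R := ℚ) (G.image (fun g => T g))
    simpa [Set.finrank, hWdef] using h
  have hfinal : N ≤ G.card := by
    have h1 : N ≤ Module.finrank ℚ W := by simpa using hcardle
    exact le_trans h1 (le_trans hfin Finset.card_image_le)
  omega
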